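/- If U ∈ GL₂(Z), u ∈ Z², v, w ∈ (1/d)Z × (1/d)Z, and U(T₁ + v) + u = T₁ + w where T₁ = Conv((0,0), (1/d,0), (0,1/d)), then U belongs to the six-element set D = { [[1,0],[0,1]], [[0,1],[1,0]], [[0,1],[-1,-1]], [[-1,-1],[1,0]], [[1,0],[-1,-1]], [[-1,-1],[0,1]] }. -/

import Mathlib

noncomputable section

/-- The lattice `(1/d)ℤ × (1/d)ℤ` inside `ℝ × ℝ`. -/
def Ld (d : ℕ) : Set (ℝ × ℝ) :=
  {p | ∃ a b : ℤ, p = ((a : ℝ) / d, (b : ℝ) / d)}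

/-- A `d`-minimal triangle: vertices in `L_d`, not collinear, and the closed triangle
meets `L_d` exactly in its three vertices. -/
def IsMinimalTriangle (d : ℕ) (p q r : ℝ × ℝ) : Prop :=
  p ∈ Ld d ∧ q ∈ Ld d ∧ r ∈ Ld d ∧
    ¬ Collinear ℝ ({p, q, r} : Set (ℝ × ℝ)) ∧
    convexHull ℝ ({p, q, r} : Set (ℝ × ℝ)) ∩ Ld d = {p, q, r}

/-- An element of `G = GL₂(ℤ) ⋉ ℤ²`: an integer matrix `[[a,b],[c,e]]` of determinant
`±1` together with an integer translation vector `(v1, v2)`. -/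
structure GMap where
  a : ℤ
  b : ℤ
  c : ℤ
  e : ℤ
  v1 : ℤ
  v2 : ℤ
  unimod : a * e - b * c = 1 ∨ a * e - b * c = -1

/-- The affine action `x ↦ Ux + v` of a `GMap` on `ℝ²`. -/
def GMap.app (g : GMap) (p : ℝ × ℝ) : ℝ × ℝ :=
  ((g.a : ℝ) * p.1 + (g.b : ℝ) * p.2 + (g.v1 : ℝ),
   (g.c : ℝ) * p.1 + (g.e : ℝ) * p.2 + (g.v2 : ℝ))

/-- A `d`-minimal segment: endpoints in `L_d`, distinct, and the closed segment meets
`L_d` exactly in its two endpoints. -/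
def IsMinimalSegment (d : ℕ) (p q : ℝ × ℝ) : Prop :=
  p ∈ Ld d ∧ q ∈ Ld d ∧ p ≠ q ∧ segment ℝ p q ∩ Ld d = {p, q}

/-- The point of `L_d` with integer numerator data `p : ℤ × ℤ`. -/
def pt (d : ℕ) (p : ℤ × ℤ) : ℝ × ℝ := ((p.1 : ℝ) / d, (p.2 : ℝ) / d)

/-- Counterclockwise orientation of the ordered triple of numerator data. -/
def ccwZ (p q r : ℤ × ℤ) : Prop :=
  0 < (q.1 - p.1) * (r.2 - p.2) - (q.2 - p.2) * (r.1 - p.1)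

/-- Weight (mod `d`) of the oriented minimal segment from `(w/d, x/d)` to `(y/d, z/d)`,
given by numerator data `(w,x)` and `(y,z)`. -/
def segWeight (d : ℕ) (p q : ℤ × ℤ) : ZMod d :=
  ((p.1 * q.2 - p.2 * q.1 : ℤ) : ZMod d)

/-- The multiset of weights of the three edges `p→q`, `q→r`, `r→p` of a triangle
given by numerator data. -/
def triWeight (d : ℕ) (p q r : ℤ × ℤ) : Multiset (ZMod d) :=
  {segWeight d p q, segWeight d q r, segWeight d r p}

/-- The standard `d`-minimal triangle `T₁ = Conv((0,0), (1/d,0), (0,1/d))`. -/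
def T1 (d : ℕ) : Set (ℝ × ℝ) :=
  convexHull ℝ ({((0 : ℝ), (0 : ℝ)), ((1 : ℝ) / d, 0), (0, (1 : ℝ) / d)} : Set (ℝ × ℝ))

/-- The linear action of an integer matrix on `ℝ²`. -/
def Uact (U : Matrix (Fin 2) (Fin 2) ℤ) (p : ℝ × ℝ) : ℝ × ℝ :=
  ((U 0 0 : ℝ) * p.1 + (U 0 1 : ℝ) * p.2, (U 1 0 : ℝ) * p.1 + (U 1 1 : ℝ) * p.2)

/-- if `U(T₁ + v) + u = T₁ + w` with `U ∈ GL₂(ℤ)`, `u ∈ ℤ²`,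
`v, w ∈ L_d`, then `U` is one of the six listed matrices. -/
theorem U_mem_dihedral_set (d : ℕ) (hd : 0 < d) (U : Matrix (Fin 2) (Fin 2) ℤ)
    (hU : U.det = 1 ∨ U.det = -1) (u : ℤ × ℤ) (v w : ℝ × ℝ)
    (hv : v ∈ Ld d) (hw : w ∈ Ld d)
    (h : (fun x => Uact U x + ((u.1 : ℝ), (u.2 : ℝ))) '' ((fun x => x + v) '' T1 d)
        = (fun x => x + w) '' T1 d) :
    U = !![1, 0; 0, 1] ∨ U = !![0, 1; 1, 0] ∨ U = !![0, 1; -1, -1] ∨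
    U = !![-1, -1; 1, 0] ∨ U = !![1, 0; -1, -1] ∨ U = !![-1, -1; 0, 1] := by
  obtain ⟨al, be, hv⟩ := hv
  obtain ⟨ga, de, hw⟩ := hw
  have hd0 : (d : ℝ) ≠ 0 := Nat.cast_ne_zero.mpr hd.ne'
  have hdpos : (0 : ℝ) < d := Nat.cast_pos.mpr hd
  have hdet : U 0 0 * U 1 1 - U 0 1 * U 1 0 = 1 ∨ U 0 0 * U 1 1 - U 0 1 * U 1 0 = -1 := by
    rw [Matrix.det_fin_two] at hU; exact hU
  -- T1 is contained in the triangle region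
  have hreg : T1 d ⊆ {p : ℝ × ℝ | 0 ≤ p.1 ∧ 0 ≤ p.2 ∧ p.1 + p.2 ≤ 1 / d} := by
    apply convexHull_min
    · rintro p hp
      simp only [Set.mem_insert_iff, Set.mem_singleton_iff] at hp
      rcases hp with rfl | rfl | rfl <;>
        refine ⟨by positivity, by positivity, by simp⟩
    · rintro ⟨x1, x2⟩ ⟨hx1, hx2, hx3⟩ ⟨y1, y2⟩ ⟨hy1, hy2, hy3⟩ s t hs ht hst
      simp only [Set.mem_setOf_eq, Prod.smul_mk, Prod.mk_add_mk, smul_eq_mul] at *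
      refine ⟨by nlinarith, by nlinarith, by nlinarith⟩
  -- key: image of any point of T1 lands in T1 after subtracting w
  have key : ∀ p : ℝ × ℝ, p ∈ T1 d →
      (Uact U (p + v) + ((u.1 : ℝ), (u.2 : ℝ))) - w ∈ T1 d := by
    intro p hp
    have hmem : Uact U (p + v) + ((u.1 : ℝ), (u.2 : ℝ)) ∈ (fun x => x + w) '' T1 d := by
      rw [← h]; exact ⟨p + v, ⟨p, hp, rfl⟩, rfl⟩
    obtain ⟨t, ht, hteq⟩ := hmem
    have : t = (Uact U (p + v) + ((u.1 : ℝ), (u.2 : ℝ))) - w := by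
      simp only at hteq
      rw [← hteq]; abel
    rwa [← this]
  -- lattice points of T1
  have hint : ∀ k l : ℤ, ((k : ℝ) / d, (l : ℝ) / d) ∈ T1 d →
      0 ≤ k ∧ 0 ≤ l ∧ k + l ≤ 1 := by
    intro k l hkl
    obtain ⟨h1, h2, h3⟩ := hreg hkl
    refine ⟨?_, ?_, ?_⟩
    · have : (0 : ℝ) ≤ (k : ℝ) := by
        have := (le_div_iff₀ hdpos).mp h1; linarith
      exact_mod_cast this
    · have : (0 : ℝ) ≤ (l : ℝ) := by
        have := (le_div_iff₀ hdpos).mp h2; linarith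
      exact_mod_cast this
    · have : ((k : ℝ) + l) ≤ 1 := by
        rw [← add_div] at h3
        have := (div_le_div_iff₀ hdpos hdpos).mp h3
        nlinarith
      exact_mod_cast this
  -- vertices of T1
  have hv0 : ((0 : ℝ), (0 : ℝ)) ∈ T1 d :=
    subset_convexHull ℝ _ (Set.mem_insert _ _)
  have hv1 : ((1 : ℝ) / d, (0 : ℝ)) ∈ T1 d :=
    subset_convexHull ℝ _ (Set.mem_insert_of_mem _ (Set.mem_insert _ _))
  have hv2 : ((0 : ℝ), (1 : ℝ) / d) ∈ T1 d :=
    subset_convexHull ℝ _ (Set.mem_insert_of_mem _ (Set.mem_insert_of_mem _ rfl))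
  -- numerators
  subst hv; subst hw
  have e0 : (Uact U (((0:ℝ), (0:ℝ)) + ((al : ℝ)/d, (be : ℝ)/d)) + ((u.1 : ℝ), (u.2 : ℝ)))
      - ((ga : ℝ)/d, (de : ℝ)/d)
      = (((U 0 0 * al + U 0 1 * be + u.1 * d - ga : ℤ) : ℝ) / d,
         ((U 1 0 * al + U 1 1 * be + u.2 * d - de : ℤ) : ℝ) / d) := by
    simp only [Uact, Prod.mk_add_mk, Prod.mk_sub_mk, Prod.mk.injEq]
    constructor <;> (push_cast; field_simp) <;> ring
  have e1 : (Uact U (((1:ℝ)/d, (0:ℝ)) + ((al : ℝ)/d, (be : ℝ)/d)) + ((u.1 : ℝ), (u.2 : ℝ)))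
      - ((ga : ℝ)/d, (de : ℝ)/d)
      = ((((U 0 0 * al + U 0 1 * be + u.1 * d - ga) + U 0 0 : ℤ) : ℝ) / d,
         (((U 1 0 * al + U 1 1 * be + u.2 * d - de) + U 1 0 : ℤ) : ℝ) / d) := by
    simp only [Uact, Prod.mk_add_mk, Prod.mk_sub_mk, Prod.mk.injEq]
    constructor <;> (push_cast; field_simp) <;> ring
  have e2 : (Uact U (((0:ℝ), (1:ℝ)/d) + ((al : ℝ)/d, (be : ℝ)/d)) + ((u.1 : ℝ), (u.2 : ℝ)))
      - ((ga : ℝ)/d, (de : ℝ)/d)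
      = ((((U 0 0 * al + U 0 1 * be + u.1 * d - ga) + U 0 1 : ℤ) : ℝ) / d,
         (((U 1 0 * al + U 1 1 * be + u.2 * d - de) + U 1 1 : ℤ) : ℝ) / d) := by
    simp only [Uact, Prod.mk_add_mk, Prod.mk_sub_mk, Prod.mk.injEq]
    constructor <;> (push_cast; field_simp) <;> ring
  have k0 := key _ hv0; rw [e0] at k0
  have k1 := key _ hv1; rw [e1] at k1
  have k2 := key _ hv2; rw [e2] at k2
  obtain ⟨c0a, c0b, c0c⟩ := hint _ _ k0
  obtain ⟨c1a, c1b, c1c⟩ := hint _ _ k1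
  obtain ⟨c2a, c2b, c2c⟩ := hint _ _ k2
  set a := U 0 0 with ha
  set b := U 0 1 with hb
  set c := U 1 0 with hc
  set e := U 1 1 with he
  set m := a * al + b * be + u.1 * (d : ℤ) - ga with hm
  set n := c * al + e * be + u.2 * (d : ℤ) - de with hn
  clear_value a b c e m n
  have hU2 : U = !![a, b; c, e] := by
    rw [ha, hb, hc, he]; exact Matrix.eta_fin_two U
  have build : ∀ x y z t : ℤ, a = x → b = y → c = z → e = t → U = !![x, y; z, t] := by
    intro x y z t h1 h2 h3 h4; rw [hU2, h1, h2, h3, h4]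
  have hne1 : ¬ (a = 0 ∧ c = 0) := by
    rintro ⟨h1, h2⟩; rw [h1, h2] at hdet; simp at hdet
  have hne2 : ¬ (b = 0 ∧ e = 0) := by
    rintro ⟨h1, h2⟩; rw [h1, h2] at hdet; simp at hdet
  have hne3 : ¬ (a = b ∧ c = e) := by
    rintro ⟨h1, h2⟩; rw [h1, h2] at hdet; simp at hdet
  have hP0 : (m = 0 ∧ n = 0) ∨ (m = 1 ∧ n = 0) ∨ (m = 0 ∧ n = 1) := by omega
  have hP1 : (m + a = 0 ∧ n + c = 0) ∨ (m + a = 1 ∧ n + c = 0) ∨ (m + a = 0 ∧ n + c = 1) := by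
    omega
  have hP2 : (m + b = 0 ∧ n + e = 0) ∨ (m + b = 1 ∧ n + e = 0) ∨ (m + b = 0 ∧ n + e = 1) := by
    omega
  clear h hreg key hint hv0 hv1 hv2 e0 e1 e2 k0 k1 k2 hdet hd0 hdpos hm hn ha hb hc he hU2
  rcases hP0 with h0 | h0 | h0 <;> rcases hP1 with h1 | h1 | h1 <;>
    rcases hP2 with h2 | h2 | h2 <;>
    first
    | exact Or.inl (build _ _ _ _ (by omega) (by omega) (by omega) (by omega))
    | exact Or.inr (Or.inl (build _ _ _ _ (by omega) (by omega) (by omega) (by omega)))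
    | exact Or.inr (Or.inr (Or.inl (build _ _ _ _ (by omega) (by omega) (by omega) (by omega))))
    | exact Or.inr (Or.inr (Or.inr (Or.inl (build _ _ _ _ (by omega) (by omega) (by omega) (by omega)))))
    | exact Or.inr (Or.inr (Or.inr (Or.inr (Or.inl (build _ _ _ _ (by omega) (by omega) (by omega) (by omega))))))
    | exact Or.inr (Or.inr (Or.inr (Or.inr (Or.inr (build _ _ _ _ (by omega) (by omega) (by omega) (by omega))))))
    | (exfalso; omega)
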